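/- Let x, x̂ ∈ ℂⁿ with x ≠ 0. Then there exists φ ∈ [0, 2π) such that ‖x − e^{iφ}x̂‖₂ · ‖x‖₂ ≤ √2 · ‖xx* − x̂x̂*‖₂, where xx* and x̂x̂* are the rank-one Hermitian matrices formed from x and x̂, and the matrix norm is the Frobenius norm. -/

import Mathlib

open Matrix

noncomputable section

/-- The Frobenius norm `‖X‖₂` of a complex matrix. -/
def frobNorm {n : ℕ} (X : Matrix (Fin n) (Fin n) ℂ) : ℝ :=
  Real.sqrt (∑ i, ∑ j, Complex.normSq (X i j))

/-- The Euclidean norm `‖x‖₂` of a vector in `ℂⁿ`. -/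
def vecNorm {n : ℕ} (x : Fin n → ℂ) : ℝ :=
  Real.sqrt (∑ i, Complex.normSq (x i))

private lemma key_ineq (a b c : ℝ) (ha : 0 ≤ a) (hb : 0 ≤ b) (hc : 0 ≤ c)
    (hcs : c ^ 2 ≤ a * b) : (a + b - 2 * c) * a ≤ 2 * (a ^ 2 + b ^ 2 - 2 * c ^ 2) := by
  set m := Real.sqrt (a * b) with hm
  have hm0 : 0 ≤ m := Real.sqrt_nonneg _
  have hm2 : m ^ 2 = a * b := Real.sq_sqrt (mul_nonneg ha hb)
  have hcm : c ≤ m := by nlinarith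
  rcases eq_or_lt_of_le (mul_nonneg (sq_nonneg a) hm0) with h0 | hpos
  · rcases mul_eq_zero.1 h0.symm with h | h
    · have ha0 : a = 0 := sq_eq_zero_iff.mp h
      have hc0 : c = 0 := by nlinarith
      nlinarith
    · have hab : a * b = 0 := by rw [← hm2, h]; ring
      have hc0 : c = 0 := by nlinarith
      nlinarith
  · have hf0 : 0 ≤ a ^ 2 + 2 * b ^ 2 - a * b := by nlinarith [sq_nonneg (a - b), sq_nonneg b]
    have hT1 : 0 ≤ a ^ 2 * (m - c) * (a ^ 2 + 2 * b ^ 2 - a * b) :=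
      mul_nonneg (mul_nonneg (sq_nonneg a) (by linarith)) hf0
    have hT2 : 0 ≤ c * (m - a) ^ 2 * (2 * m ^ 2 + 4 * a * m + a ^ 2) :=
      mul_nonneg (mul_nonneg hc (sq_nonneg _)) (by positivity)
    have hT3 : 0 ≤ 4 * a ^ 2 * m * c * (m - c) := by
      have := mul_nonneg hc (sub_nonneg.2 hcm)
      nlinarith
    have E : a ^ 2 * m * (2 * (a ^ 2 + b ^ 2 - 2 * c ^ 2) - (a + b - 2 * c) * a) =
        a ^ 2 * (m - c) * (a ^ 2 + 2 * b ^ 2 - a * b)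
          + c * (m - a) ^ 2 * (2 * m ^ 2 + 4 * a * m + a ^ 2)
          + 4 * a ^ 2 * m * c * (m - c) := by
      linear_combination (c * (a ^ 2 - 2 * a * b - 2 * m ^ 2)) * hm2
    have key : 0 ≤ a ^ 2 * m * (2 * (a ^ 2 + b ^ 2 - 2 * c ^ 2) - (a + b - 2 * c) * a) := by
      rw [E]; linarith
    nlinarith [key, hpos]

/-- for `x, x̂ ∈ ℂⁿ` with `x ≠ 0` there is `φ ∈ [0,2π)` with
`‖x − e^{iφ}x̂‖₂ · ‖x‖₂ ≤ √2 · ‖xx* − x̂x̂*‖₂`. -/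
theorem stmt16 {n : ℕ} (x xhat : Fin n → ℂ) (hx : x ≠ 0) :
    ∃ φ ∈ Set.Ico (0 : ℝ) (2 * Real.pi),
      vecNorm (x - Complex.exp (φ * Complex.I) • xhat) * vecNorm x ≤
        Real.sqrt 2 * frobNorm (vecMulVec x (star x) - vecMulVec xhat (star xhat)) := by
  classical
  set a : ℝ := ∑ i, Complex.normSq (x i) with ha_def
  set b : ℝ := ∑ i, Complex.normSq (xhat i) with hb_def
  set s : ℂ := ∑ i, x i * (starRingEnd ℂ) (xhat i) with hs_def
  set c : ℝ := ‖s‖ with hc_def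
  have ha : 0 ≤ a := Finset.sum_nonneg fun i _ => Complex.normSq_nonneg _
  have hb : 0 ≤ b := Finset.sum_nonneg fun i _ => Complex.normSq_nonneg _
  have hc : 0 ≤ c := norm_nonneg _
  set θ : ℝ := Complex.arg s with hθ
  set φ : ℝ := if 0 ≤ θ then θ else θ + 2 * Real.pi with hφ
  have hpi : 0 < Real.pi := Real.pi_pos
  have hθ1 : θ ≤ Real.pi := Complex.arg_le_pi s
  have hθ2 : -Real.pi < θ := Complex.neg_pi_lt_arg s
  have hφmem : φ ∈ Set.Ico (0:ℝ) (2 * Real.pi) := by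
    rw [hφ]
    split_ifs with h
    · exact ⟨h, by linarith⟩
    · push_neg at h
      exact ⟨by linarith, by linarith⟩
  refine ⟨φ, hφmem, ?_⟩
  set e : ℂ := Complex.exp (θ * Complex.I) with he_def
  have he : Complex.exp (φ * Complex.I) = e := by
    rw [hφ]
    split_ifs with h
    · rfl
    · rw [he_def]
      push_cast
      rw [add_mul, Complex.exp_add, Complex.exp_two_pi_mul_I, mul_one]
  have habs_e : ‖e‖ = 1 := Complex.norm_exp_ofReal_mul_I θ
  have hnsq_e : Complex.normSq e = 1 := by
    rw [← Complex.sq_norm, habs_e]; norm_num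
  have hconj : (starRingEnd ℂ) e * s = (c : ℂ) := by
    have h1 : (c : ℂ) * e = s := by
      rw [hc_def, he_def, hθ]; exact Complex.norm_mul_exp_arg_mul_I s
    have h2 : (starRingEnd ℂ) e * e = 1 := by
      rw [mul_comm, Complex.mul_conj, hnsq_e, Complex.ofReal_one]
    calc (starRingEnd ℂ) e * s = (starRingEnd ℂ) e * ((c:ℂ) * e) := by rw [h1]
      _ = (c:ℂ) * ((starRingEnd ℂ) e * e) := by ring
      _ = (c:ℂ) := by rw [h2, mul_one]
  -- sum A
  have hA : ∑ i, Complex.normSq (x i - e * xhat i) = a + b - 2 * c := by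
    have hterm : ∀ i, Complex.normSq (x i - e * xhat i) =
        Complex.normSq (x i) + Complex.normSq (xhat i)
          - 2 * ((starRingEnd ℂ) e * (x i * (starRingEnd ℂ) (xhat i))).re := by
      intro i
      rw [Complex.normSq_sub, Complex.normSq_mul, hnsq_e, one_mul]
      have : x i * (starRingEnd ℂ) (e * xhat i)
          = (starRingEnd ℂ) e * (x i * (starRingEnd ℂ) (xhat i)) := by
        rw [_root_.map_mul]; ring
      rw [this]
    rw [Finset.sum_congr rfl fun i _ => hterm i]
    rw [Finset.sum_sub_distrib, Finset.sum_add_distrib]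
    have h2 : ∑ i, 2 * ((starRingEnd ℂ) e * (x i * (starRingEnd ℂ) (xhat i))).re = 2 * c := by
      rw [← Finset.mul_sum, ← Complex.re_sum, ← Finset.mul_sum, ← hs_def, hconj]
      simp
    rw [h2, ← ha_def, ← hb_def]
  have hAnn : 0 ≤ a + b - 2 * c := by
    rw [← hA]; exact Finset.sum_nonneg fun i _ => Complex.normSq_nonneg _
  -- sum B
  have hB : ∑ i, ∑ j, Complex.normSq
      (x i * (starRingEnd ℂ) (x j) - xhat i * (starRingEnd ℂ) (xhat j))
      = a ^ 2 + b ^ 2 - 2 * c ^ 2 := by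
    have hterm : ∀ i j, Complex.normSq
        (x i * (starRingEnd ℂ) (x j) - xhat i * (starRingEnd ℂ) (xhat j)) =
        Complex.normSq (x i) * Complex.normSq (x j)
          + Complex.normSq (xhat i) * Complex.normSq (xhat j)
          - 2 * ((x i * (starRingEnd ℂ) (xhat i)) *
              (starRingEnd ℂ) (x j * (starRingEnd ℂ) (xhat j))).re := by
      intro i j
      rw [Complex.normSq_sub, Complex.normSq_mul, Complex.normSq_mul,
        Complex.normSq_conj, Complex.normSq_conj]
      have : (x i * (starRingEnd ℂ) (x j)) *
          (starRingEnd ℂ) (xhat i * (starRingEnd ℂ) (xhat j))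
          = (x i * (starRingEnd ℂ) (xhat i)) *
              (starRingEnd ℂ) (x j * (starRingEnd ℂ) (xhat j)) := by
        simp only [_root_.map_mul, Complex.conj_conj]
        ring
      rw [this]
    rw [Finset.sum_congr rfl fun i _ => Finset.sum_congr rfl fun j _ => hterm i j]
    simp only [Finset.sum_sub_distrib, Finset.sum_add_distrib]
    have h1 : ∑ i, ∑ j, Complex.normSq (x i) * Complex.normSq (x j) = a * a :=
      (Finset.sum_mul_sum _ _ _ _).symm
    have h2 : ∑ i, ∑ j, Complex.normSq (xhat i) * Complex.normSq (xhat j) = b * b :=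
      (Finset.sum_mul_sum _ _ _ _).symm
    have h3 : ∑ i, ∑ j, 2 * ((x i * (starRingEnd ℂ) (xhat i)) *
        (starRingEnd ℂ) (x j * (starRingEnd ℂ) (xhat j))).re = 2 * c ^ 2 := by
      have hsum : ∑ i, ∑ j, ((x i * (starRingEnd ℂ) (xhat i)) *
          (starRingEnd ℂ) (x j * (starRingEnd ℂ) (xhat j)))
          = s * (starRingEnd ℂ) s := by
        rw [hs_def, map_sum, Finset.sum_mul_sum]
      have hre : ∑ i, ∑ j, 2 * ((x i * (starRingEnd ℂ) (xhat i)) *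
          (starRingEnd ℂ) (x j * (starRingEnd ℂ) (xhat j))).re
          = 2 * (∑ i, ∑ j, ((x i * (starRingEnd ℂ) (xhat i)) *
              (starRingEnd ℂ) (x j * (starRingEnd ℂ) (xhat j)))).re := by
        rw [Complex.re_sum, Finset.mul_sum]
        exact Finset.sum_congr rfl fun i _ => by rw [Complex.re_sum, Finset.mul_sum]
      rw [hre, hsum, Complex.mul_conj, ← Complex.sq_norm, ← hc_def]
      norm_cast
    rw [h1, h2, h3]; ring
  have hBnn : 0 ≤ a ^ 2 + b ^ 2 - 2 * c ^ 2 := by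
    rw [← hB]
    exact Finset.sum_nonneg fun i _ => Finset.sum_nonneg fun j _ => Complex.normSq_nonneg _
  -- Cauchy-Schwarz
  have hCS : c ^ 2 ≤ a * b := by
    have h1 : c ≤ ∑ i, ‖x i‖ * ‖xhat i‖ := by
      rw [hc_def, hs_def]
      refine le_trans (norm_sum_le _ _) (le_of_eq ?_)
      refine Finset.sum_congr rfl fun i _ => ?_
      rw [norm_mul, Complex.norm_conj]
    have h2 : (∑ i, ‖x i‖ * ‖xhat i‖) ^ 2 ≤
        (∑ i, ‖x i‖ ^ 2) * (∑ i, ‖xhat i‖ ^ 2) :=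
      Finset.sum_mul_sq_le_sq_mul_sq _ _ _
    have h3 : (∑ i, ‖x i‖ ^ 2) = a := by
      rw [ha_def]; exact Finset.sum_congr rfl fun i _ => Complex.sq_norm _
    have h4 : (∑ i, ‖xhat i‖ ^ 2) = b := by
      rw [hb_def]; exact Finset.sum_congr rfl fun i _ => Complex.sq_norm _
    calc c ^ 2 ≤ (∑ i, ‖x i‖ * ‖xhat i‖) ^ 2 := by
          have h0 : 0 ≤ ∑ i, ‖x i‖ * ‖xhat i‖ :=
            Finset.sum_nonneg fun i _ => mul_nonneg (norm_nonneg _) (norm_nonneg _)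
          nlinarith
      _ ≤ a * b := by rw [← h3, ← h4]; exact h2
  -- final assembly
  have h5 : vecNorm (x - Complex.exp (φ * Complex.I) • xhat) = Real.sqrt (a + b - 2 * c) := by
    rw [vecNorm, ← hA]
    congr 1
    refine Finset.sum_congr rfl fun i _ => ?_
    rw [he]
    simp [Pi.sub_apply, Pi.smul_apply, smul_eq_mul]
  have h6 : frobNorm (vecMulVec x (star x) - vecMulVec xhat (star xhat))
      = Real.sqrt (a ^ 2 + b ^ 2 - 2 * c ^ 2) := by
    rw [frobNorm, ← hB]
    congr 1
  rw [h5, h6, vecNorm, ← ha_def, ← Real.sqrt_mul hAnn, ← Real.sqrt_mul (by norm_num : (0:ℝ) ≤ 2)]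
  exact Real.sqrt_le_sqrt (key_ineq a b c ha hb hc hCS)
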